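/- Let τ be a locally finite positive Borel measure on ℝ supported in [0,∞). If ∫₀^∞ log[ 1 + (M_sτ(k)/k)² ] k² dk < ∞, then Σ_{n=0}^∞ τ([n,n+1])² < ∞. -/

import Mathlib

set_option maxHeartbeats 1000000


open MeasureTheory Set
open scoped ENNReal

/-- The short-range Hardy–Littlewood maximal function
`(M_sτ)(x) = sup_{0 < L ≤ 1} τ([x−L, x+L])/(2L)`. -/
noncomputable def maxShort (τ : Measure ℝ) (x : ℝ) : ℝ≥0∞ :=
  ⨆ (L : ℝ) (_ : 0 < L) (_ : L ≤ 1), τ (Icc (x - L) (x + L)) / ENNReal.ofReal (2 * L)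

/-- The integrand `log[1 + (M_sτ(k)/k)²]·k²`, with value `∞` where `M_sτ(k) = ∞`. -/
noncomputable def logMaxShort (τ : Measure ℝ) (k : ℝ) : ℝ≥0∞ :=
  if maxShort τ k = ⊤ then ⊤
  else ENNReal.ofReal (Real.log (1 + ((maxShort τ k).toReal / k) ^ 2) * k ^ 2)


lemma half_le_log_one_add {t : ℝ} (h0 : 0 ≤ t) (h1 : t ≤ 1) :
    t / 2 ≤ Real.log (1 + t) := by
  rw [Real.le_log_iff_exp_le (by linarith)]
  have h2 : 1 - t / 2 ≤ Real.exp (-(t / 2)) := by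
    have := Real.add_one_le_exp (-(t / 2)); linarith
  have h3 : Real.exp (t / 2) * Real.exp (-(t / 2)) = 1 := by
    rw [← Real.exp_add]; simp
  nlinarith [Real.exp_pos (t/2)]

lemma key (τ : Measure ℝ) (n : ℕ) (hn : 1 ≤ n)
    (hfin : τ (Icc (n : ℝ) ((n : ℝ) + 1)) ≠ ⊤) {k : ℝ}
    (hk : k ∈ Ioo ((n : ℝ)) ((n : ℝ) + 1)) :
    min ((τ (Icc (n : ℝ) ((n : ℝ) + 1))) ^ 2 / 32) (ENNReal.ofReal (Real.log 2 / 4))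
      ≤ logMaxShort τ k := by
  obtain ⟨hk1, hk2⟩ := hk
  have hn1 : (1 : ℝ) ≤ n := by exact_mod_cast hn
  have hk0 : (0 : ℝ) < k := by linarith
  -- maximal function lower bound via L = 1
  have hM : τ (Icc (n : ℝ) ((n : ℝ) + 1)) / 2 ≤ maxShort τ k := by
    have hsub : Icc ((n : ℝ)) ((n : ℝ) + 1) ⊆ Icc (k - 1) (k + 1) :=
      Icc_subset_Icc (by linarith) (by linarith)
    have h1 : τ (Icc (n : ℝ) ((n : ℝ) + 1)) / ENNReal.ofReal (2 * 1)
        ≤ τ (Icc (k - 1) (k + 1)) / ENNReal.ofReal (2 * 1) :=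
      ENNReal.div_le_div_right (measure_mono hsub) _
    have h2 : τ (Icc (k - 1) (k + 1)) / ENNReal.ofReal (2 * 1) ≤ maxShort τ k := by
      unfold maxShort
      exact le_iSup_of_le (1 : ℝ) <| le_iSup_of_le one_pos <| le_iSup_of_le le_rfl le_rfl
    have h3 : ENNReal.ofReal (2 * 1) = (2 : ℝ≥0∞) := by norm_num
    calc τ (Icc (n : ℝ) ((n : ℝ) + 1)) / 2
        = τ (Icc (n : ℝ) ((n : ℝ) + 1)) / ENNReal.ofReal (2 * 1) := by rw [h3]
      _ ≤ _ := h1.trans h2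
  by_cases htop : maxShort τ k = ⊤
  · simp [logMaxShort, htop]
  rw [logMaxShort, if_neg htop]
  set a := (τ (Icc (n : ℝ) ((n : ℝ) + 1))).toReal with ha
  have ha0 : 0 ≤ a := ENNReal.toReal_nonneg
  set m := (maxShort τ k).toReal with hm
  have hm0 : 0 ≤ m := ENNReal.toReal_nonneg
  have hma : a / 2 ≤ m := by
    have := ENNReal.toReal_mono htop hM
    rwa [ENNReal.toReal_div, ENNReal.toReal_ofNat] at this
  have hx : a / (2 * ((n : ℝ) + 1)) ≤ m / k := by
    rw [div_le_div_iff₀ (by positivity) hk0]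
    nlinarith
  have hkn : (n : ℝ) ^ 2 ≤ k ^ 2 := by nlinarith
  by_cases hcase : a ≤ 2 * ((n : ℝ) + 1)
  · refine le_trans (min_le_left _ _) ?_
    have heq : (τ (Icc (n : ℝ) ((n : ℝ) + 1))) ^ 2 / 32 = ENNReal.ofReal (a ^ 2 / 32) := by
      rw [ENNReal.ofReal_div_of_pos (by norm_num), ENNReal.ofReal_pow ha0,
        ENNReal.ofReal_toReal hfin]
      norm_num
    rw [heq]
    apply ENNReal.ofReal_le_ofReal
    set u := a / (2 * ((n : ℝ) + 1)) with hu
    have hu0 : 0 ≤ u := by positivity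
    have hu1 : u ≤ 1 := by
      rw [hu, div_le_one (by positivity)]; linarith
    have hlog : u ^ 2 / 2 ≤ Real.log (1 + (m / k) ^ 2) := by
      refine le_trans (half_le_log_one_add (sq_nonneg u) (by nlinarith [hu0, hu1])) ?_
      apply Real.log_le_log (by positivity)
      nlinarith [div_nonneg hm0 hk0.le]
    have hu2 : u ^ 2 = a ^ 2 / (4 * ((n : ℝ) + 1) ^ 2) := by
      rw [hu, div_pow, mul_pow]; norm_num
    have h4 : ((n : ℝ) + 1) ^ 2 ≤ 4 * (n : ℝ) ^ 2 := by nlinarith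
    have hlognn : 0 ≤ Real.log (1 + (m / k) ^ 2) :=
      Real.log_nonneg (by nlinarith [sq_nonneg (m / k)])
    calc a ^ 2 / 32 ≤ u ^ 2 / 2 * (n : ℝ) ^ 2 := by
          rw [hu2, div_div, div_mul_eq_mul_div,
            div_le_div_iff₀ (by norm_num) (by positivity)]
          nlinarith [mul_le_mul_of_nonneg_left h4 (sq_nonneg a)]
      _ ≤ Real.log (1 + (m / k) ^ 2) * (n : ℝ) ^ 2 := by
          apply mul_le_mul_of_nonneg_right hlog (by positivity)
      _ ≤ Real.log (1 + (m / k) ^ 2) * k ^ 2 := by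
          apply mul_le_mul_of_nonneg_left hkn hlognn
  · refine le_trans (min_le_right _ _) ?_
    apply ENNReal.ofReal_le_ofReal
    push_neg at hcase
    have hmk : 1 ≤ m / k := by
      rw [le_div_iff₀ hk0]; nlinarith
    have hlog : Real.log 2 ≤ Real.log (1 + (m / k) ^ 2) := by
      apply Real.log_le_log (by norm_num)
      nlinarith
    have hl2 : 0 < Real.log 2 := Real.log_pos (by norm_num)
    have hk2sq : (1 : ℝ) ≤ k ^ 2 := by nlinarith
    have h5 : Real.log 2 * 1 ≤ Real.log 2 * k ^ 2 :=
      mul_le_mul_of_nonneg_left hk2sq hl2.le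
    have h6 : Real.log 2 * k ^ 2 ≤ Real.log (1 + (m / k) ^ 2) * k ^ 2 :=
      mul_le_mul_of_nonneg_right hlog (by positivity)
    linarith

/-- Let `τ` be a locally finite positive Borel measure on `ℝ` supported in
`[0,∞)`.  If `∫₀^∞ log[1 + (M_sτ(k)/k)²] k² dk < ∞`, then `Σₙ τ([n,n+1])² < ∞`. -/
theorem stmt_4 (τ : Measure ℝ) [IsLocallyFiniteMeasure τ] (hsupp : τ (Iio 0) = 0)
    (h : (∫⁻ k in Ioi (0 : ℝ), logMaxShort τ k) < ⊤) :
    (∑' n : ℕ, (τ (Icc (n : ℝ) ((n : ℝ) + 1))) ^ 2) < ⊤ := by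
  classical
  set c : ℝ≥0∞ := ENNReal.ofReal (Real.log 2 / 4) with hc
  have hc0 : c ≠ 0 := by
    rw [hc]
    simp only [ne_eq, ENNReal.ofReal_eq_zero, not_le]
    positivity
  have hfin : ∀ m : ℕ, τ (Icc (m : ℝ) ((m : ℝ) + 1)) ≠ ⊤ :=
    fun m => (isCompact_Icc.measure_lt_top).ne
  set T : ℕ → ℝ≥0∞ := fun m => min ((τ (Icc (m : ℝ) ((m : ℝ) + 1))) ^ 2 / 32) c with hT
  -- lower bound for the integral by the tail sum
  have hsum : ∑' n : ℕ, T (n + 1) ≤ ∫⁻ k in Ioi (0 : ℝ), logMaxShort τ k := by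
    have hdisj : Pairwise (Function.onFun Disjoint
        fun n : ℕ => Ioo ((((n + 1) : ℕ) : ℝ)) ((((n + 1) : ℕ) : ℝ) + 1)) := by
      intro i j hij
      simp only [Function.onFun, Set.Ioo_disjoint_Ioo]
      rcases hij.lt_or_gt with hlt | hlt
      · have : (i : ℝ) + 1 ≤ (j : ℝ) := by exact_mod_cast hlt
        push_cast
        refine le_trans (min_le_left _ _) (le_trans ?_ (le_max_right _ _))
        linarith
      · have : (j : ℝ) + 1 ≤ (i : ℝ) := by exact_mod_cast hlt
        push_cast
        refine le_trans (min_le_right _ _) (le_trans ?_ (le_max_left _ _))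
        linarith
    have hsub : (⋃ n : ℕ, Ioo ((((n + 1) : ℕ) : ℝ)) ((((n + 1) : ℕ) : ℝ) + 1)) ⊆ Ioi 0 := by
      intro x hx
      simp only [mem_iUnion, mem_Ioo] at hx
      obtain ⟨n, hn1, _⟩ := hx
      have : (0 : ℝ) ≤ ((n + 1 : ℕ) : ℝ) := Nat.cast_nonneg _
      exact mem_Ioi.2 (lt_of_le_of_lt this hn1)
    calc ∑' n : ℕ, T (n + 1)
        ≤ ∑' n : ℕ, ∫⁻ k in Ioo ((((n + 1) : ℕ) : ℝ)) ((((n + 1) : ℕ) : ℝ) + 1),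
            logMaxShort τ k := by
          apply ENNReal.tsum_le_tsum
          intro n
          have hkey : ∀ k ∈ Ioo ((((n + 1) : ℕ) : ℝ)) ((((n + 1) : ℕ) : ℝ) + 1),
              T (n + 1) ≤ logMaxShort τ k := fun k hk =>
            key τ (n + 1) (Nat.le_add_left 1 n) (hfin (n + 1)) hk
          calc T (n + 1)
              = T (n + 1) * volume (Ioo ((((n + 1) : ℕ) : ℝ)) ((((n + 1) : ℕ) : ℝ) + 1)) := by
                rw [Real.volume_Ioo]
                norm_num
            _ = ∫⁻ _ in Ioo ((((n + 1) : ℕ) : ℝ)) ((((n + 1) : ℕ) : ℝ) + 1), T (n + 1) := by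
                rw [setLIntegral_const]
            _ ≤ _ := lintegral_mono_ae (ae_restrict_of_forall_mem measurableSet_Ioo hkey)
      _ = ∫⁻ k in ⋃ n : ℕ, Ioo ((((n + 1) : ℕ) : ℝ)) ((((n + 1) : ℕ) : ℝ) + 1),
            logMaxShort τ k :=
          (lintegral_iUnion (fun _ => measurableSet_Ioo) hdisj _).symm
      _ ≤ _ := lintegral_mono_set hsub
  have htsum_ne : ∑' n : ℕ, T (n + 1) ≠ ⊤ := (lt_of_le_of_lt hsum h).ne
  have hFfin : {n : ℕ | c ≤ T (n + 1)}.Finite :=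
    ENNReal.finite_const_le_of_tsum_ne_top htsum_ne hc0
  set F : Finset ℕ := hFfin.toFinset with hF
  have hpt : ∀ n : ℕ, (τ (Icc (((n + 1 : ℕ)) : ℝ) ((((n + 1 : ℕ)) : ℝ) + 1))) ^ 2 ≤
      (↑F : Set ℕ).indicator
        (fun m => (τ (Icc (((m + 1 : ℕ)) : ℝ) ((((m + 1 : ℕ)) : ℝ) + 1))) ^ 2) n
        + 32 * T (n + 1) := by
    intro n
    by_cases hn : n ∈ F
    · rw [Set.indicator_of_mem (by simpa using hn)]
      exact le_self_add
    · have hnot : ¬ c ≤ T (n + 1) := by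
        simpa [hF, hFfin.mem_toFinset] using hn
      have hlt : T (n + 1) < c := lt_of_not_ge hnot
      have hmin : T (n + 1) = (τ (Icc (((n + 1 : ℕ)) : ℝ) ((((n + 1 : ℕ)) : ℝ) + 1))) ^ 2 / 32 := by
        rcases min_cases ((τ (Icc (((n + 1 : ℕ)) : ℝ) ((((n + 1 : ℕ)) : ℝ) + 1))) ^ 2 / 32) c
          with ⟨h1, _⟩ | ⟨h1, _⟩
        · exact h1
        · exfalso; rw [hT] at hlt; simp only at hlt; rw [h1] at hlt; exact lt_irrefl _ hlt
      have h32 : (τ (Icc (((n + 1 : ℕ)) : ℝ) ((((n + 1 : ℕ)) : ℝ) + 1))) ^ 2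
          = 32 * T (n + 1) := by
        rw [hmin, mul_comm]
        exact (ENNReal.div_mul_cancel (by norm_num) (by norm_num)).symm
      rw [h32]
      exact le_add_self
  have h1 : ∑' n : ℕ, (τ (Icc (((n + 1 : ℕ)) : ℝ) ((((n + 1 : ℕ)) : ℝ) + 1))) ^ 2
      ≤ ∑ n ∈ F, (τ (Icc (((n + 1 : ℕ)) : ℝ) ((((n + 1 : ℕ)) : ℝ) + 1))) ^ 2
        + 32 * ∑' n : ℕ, T (n + 1) := by
    calc ∑' n : ℕ, (τ (Icc (((n + 1 : ℕ)) : ℝ) ((((n + 1 : ℕ)) : ℝ) + 1))) ^ 2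
        ≤ ∑' n : ℕ, ((↑F : Set ℕ).indicator
            (fun m => (τ (Icc (((m + 1 : ℕ)) : ℝ) ((((m + 1 : ℕ)) : ℝ) + 1))) ^ 2) n
            + 32 * T (n + 1)) := ENNReal.tsum_le_tsum hpt
      _ = _ := by
          rw [ENNReal.tsum_add, ENNReal.tsum_mul_left, ← sum_eq_tsum_indicator]
  have htail : ∑' n : ℕ, (τ (Icc (((n + 1 : ℕ)) : ℝ) ((((n + 1 : ℕ)) : ℝ) + 1))) ^ 2 < ⊤ := by
    refine lt_of_le_of_lt h1 (ENNReal.add_lt_top.2 ⟨?_, ?_⟩)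
    · exact ENNReal.sum_lt_top.2 fun n _ => ENNReal.pow_lt_top (hfin (n + 1)).lt_top
    · exact ENNReal.mul_lt_top (by norm_num) (lt_of_le_of_lt hsum h)
  rw [tsum_eq_zero_add' ENNReal.summable]
  exact ENNReal.add_lt_top.2 ⟨ENNReal.pow_lt_top (hfin 0).lt_top, htail⟩
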